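/- Let $I = [\tau, 0]$ with $\tau < 0$ and $1 < p < \infty$. Let $\mu$ be a finite Borel measure on $I$ and define $D\rho = \int_\tau^0 \rho(\sigma)\,\mu(d\sigma)$ for $\rho \in W^{1,p}(I)$. Then for every $\varepsilon > 0$ there exists $b(\varepsilon) \ge 0$ such that $|D\rho| \le \varepsilon\|\rho'\|_{L^p(I)} + b(\varepsilon)\|\rho\|_{L^p(I)}$ for all $\rho \in W^{1,p}(I)$. -/

import Mathlib

open MeasureTheory Set
open scoped ENNReal NNReal

/-- Relative boundedness of the delay operator with relative bound `0`:
for a finite Borel measure `μ` on `I = [τ,0]` and `Dρ = ∫_τ^0 ρ dμ`, for every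
`ε > 0` there is `b(ε) ≥ 0` with `|Dρ| ≤ ε ‖ρ'‖_{L^p(I)} + b(ε) ‖ρ‖_{L^p(I)}`
for all `ρ ∈ W^{1,p}(I)`. -/
theorem delay_operator_relatively_bounded
    (τ : ℝ) (hτ : τ < 0) (p : ℝ) (hp : 1 < p)
    (μ : Measure ℝ) [IsFiniteMeasure μ] (hμ : μ (Icc τ 0)ᶜ = 0) :
    ∀ ε > (0 : ℝ), ∃ b : ℝ, 0 ≤ b ∧
      ∀ ρ ρ' : ℝ → ℝ,
        (∀ t ∈ Icc τ 0, HasDerivWithinAt ρ (ρ' t) (Icc τ 0) t) →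
        MemLp ρ' (ENNReal.ofReal p) (volume.restrict (Icc τ 0)) →
        |∫ σ, ρ σ ∂μ| ≤
          ε * (eLpNorm ρ' (ENNReal.ofReal p) (volume.restrict (Icc τ 0))).toReal
            + b * (eLpNorm ρ (ENNReal.ofReal p) (volume.restrict (Icc τ 0))).toReal := by
  intro ε hε
  have hp0 : (0:ℝ) < p := lt_trans one_pos hp
  set P : ℝ≥0∞ := ENNReal.ofReal p with hPdef
  have hPtoReal : P.toReal = p := ENNReal.toReal_ofReal hp0.le
  have hP1 : (1 : ℝ≥0∞) ≤ P := ENNReal.one_le_ofReal.2 hp.le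
  have hP0 : P ≠ 0 := (lt_of_lt_of_le one_pos hP1).ne'
  have hPtop : P ≠ ∞ := ENNReal.ofReal_ne_top
  set μT : ℝ := (μ Set.univ).toReal with hμTdef
  have hμT0 : 0 ≤ μT := ENNReal.toReal_nonneg
  have hq0 : 0 < 1 - 1/p := by
    have h1 : 1/p < 1 := by rw [div_lt_one hp0]; exact hp
    linarith
  have hc0 : 0 < ε / (μT + 1) := by positivity
  have hexp : (0:ℝ) ≤ 1/(1:ℝ) - 1/p := by
    rw [show (1:ℝ)/1 = 1 by norm_num]; linarith
  set δ : ℝ := min (-τ/2) ((ε/(μT+1)) ^ (p/(p-1))) with hδdef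
  have hδ0 : 0 < δ := lt_min (by linarith) (Real.rpow_pos_of_pos hc0 _)
  have hδτ : δ ≤ -τ/2 := min_le_left _ _
  have hδp : 0 < δ ^ (1/p) := Real.rpow_pos_of_pos hδ0 _
  have hδε : μT * δ ^ (1 - 1/p) ≤ ε := by
    have hpm1 : p - 1 ≠ 0 := by linarith
    have h1 : δ ^ (1 - 1/p) ≤ ε / (μT + 1) := by
      calc δ ^ (1 - 1/p) ≤ ((ε/(μT+1)) ^ (p/(p-1))) ^ (1 - 1/p) :=
            Real.rpow_le_rpow hδ0.le (min_le_right _ _) hq0.le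
        _ = (ε/(μT+1)) ^ ((p/(p-1)) * (1 - 1/p)) := by rw [← Real.rpow_mul hc0.le]
        _ = ε / (μT + 1) := by
            rw [show (p/(p-1)) * (1 - 1/p) = 1 by field_simp, Real.rpow_one]
    have h2 : μT * (ε / (μT + 1)) ≤ ε := by
      rw [mul_comm, div_mul_eq_mul_div, div_le_iff₀ (by positivity)]
      nlinarith
    exact le_trans (mul_le_mul_of_nonneg_left h1 hμT0) h2
  refine ⟨μT / δ ^ (1/p), by positivity, ?_⟩
  intro ρ ρ' hd hmem
  have hcont : ContinuousOn ρ (Icc τ 0) := fun t ht => (hd t ht).continuousWithinAt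
  have hmeasρ : AEStronglyMeasurable ρ (volume.restrict (Icc τ 0)) :=
    hcont.aestronglyMeasurable measurableSet_Icc
  set A : ℝ := (eLpNorm ρ' P (volume.restrict (Icc τ 0))).toReal with hA
  set B : ℝ := (eLpNorm ρ P (volume.restrict (Icc τ 0))).toReal with hB
  have hA0 : 0 ≤ A := ENNReal.toReal_nonneg
  have hB0 : 0 ≤ B := ENNReal.toReal_nonneg
  have hAfin : eLpNorm ρ' P (volume.restrict (Icc τ 0)) ≠ ⊤ := hmem.2.ne
  have hBfin : eLpNorm ρ P (volume.restrict (Icc τ 0)) ≠ ⊤ := by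
    obtain ⟨C, hC⟩ := isCompact_Icc.exists_bound_of_continuousOn hcont
    refine ne_top_of_le_ne_top ?_
      (eLpNorm_le_of_ae_bound (C := C)
        ((ae_restrict_iff' measurableSet_Icc).2 (Filter.Eventually.of_forall hC)))
    exact ENNReal.mul_ne_top
      (ENNReal.rpow_ne_top_of_nonneg (by positivity)
        (by rw [Measure.restrict_apply_univ]; exact (measure_Icc_lt_top).ne))
      ENNReal.ofReal_ne_top
  haveI : IsFiniteMeasure (volume.restrict (Icc τ 0)) :=
    ⟨by rw [Measure.restrict_apply_univ]; exact measure_Icc_lt_top⟩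
  have hint : IntegrableOn ρ' (Icc τ 0) volume := hmem.integrable hP1
  -- key estimate via FTC + Hölder on a short interval
  have key : ∀ u v : ℝ, u ∈ Icc τ 0 → v ∈ Icc τ 0 → u ≤ v → v - u ≤ δ →
      |ρ v - ρ u| ≤ A * δ ^ (1 - 1/p) := by
    intro u v hu hv huv hlen
    have hsub : Icc u v ⊆ Icc τ 0 := Icc_subset_Icc hu.1 hv.2
    have hii : IntervalIntegrable ρ' volume u v := by
      rw [intervalIntegrable_iff_integrableOn_Icc_of_le huv]
      exact hint.mono_set hsub
    have hftc : ∫ x in u..v, ρ' x = ρ v - ρ u := by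
      refine intervalIntegral.integral_eq_sub_of_hasDeriv_right_of_le huv
        (hcont.mono hsub) (fun x hx => ?_) hii
      have hxI : x ∈ Icc τ 0 := ⟨hu.1.trans hx.1.le, hx.2.le.trans hv.2⟩
      exact (hd x hxI).mono_of_mem_nhdsWithin
        (Icc_mem_nhdsGT_of_mem ⟨hxI.1, lt_of_lt_of_le hx.2 hv.2⟩)
    have hmono : volume.restrict (Ioc u v) ≤ volume.restrict (Icc τ 0) :=
      Measure.restrict_mono (Ioc_subset_Icc_self.trans hsub) le_rfl
    have hmeas' : AEStronglyMeasurable ρ' (volume.restrict (Ioc u v)) :=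
      hmem.1.mono_measure hmono
    have hfin2 : eLpNorm ρ' P (volume.restrict (Ioc u v)) *
        (volume.restrict (Ioc u v)) Set.univ ^ (1/(1:ℝ≥0∞).toReal - 1/P.toReal) ≠ ⊤ := by
      refine ENNReal.mul_ne_top (ne_top_of_le_ne_top hAfin (eLpNorm_mono_measure _ hmono)) ?_
      rw [Measure.restrict_apply_univ, Real.volume_Ioc]
      exact ENNReal.rpow_ne_top_of_nonneg
        (by rw [ENNReal.toReal_one, hPtoReal]; exact hexp) ENNReal.ofReal_ne_top
    have hend : (eLpNorm ρ' P (volume.restrict (Ioc u v)) *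
        (volume.restrict (Ioc u v)) Set.univ ^ (1/(1:ℝ≥0∞).toReal - 1/P.toReal)).toReal
        ≤ A * δ ^ (1 - 1/p) := by
      rw [ENNReal.toReal_mul]
      have h1 : (eLpNorm ρ' P (volume.restrict (Ioc u v))).toReal ≤ A :=
        ENNReal.toReal_mono hAfin (eLpNorm_mono_measure _ hmono)
      have h2 : ((volume.restrict (Ioc u v)) Set.univ
          ^ (1/(1:ℝ≥0∞).toReal - 1/P.toReal)).toReal ≤ δ ^ (1 - 1/p) := by
        rw [Measure.restrict_apply_univ, Real.volume_Ioc, ENNReal.toReal_one, hPtoReal,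
          ← ENNReal.toReal_rpow, ENNReal.toReal_ofReal (by linarith : (0:ℝ) ≤ v - u)]
        rw [show 1/(1:ℝ) - 1/p = 1 - 1/p by norm_num]
        exact Real.rpow_le_rpow (by linarith) hlen hq0.le
      exact mul_le_mul h1 h2 ENNReal.toReal_nonneg hA0
    calc |ρ v - ρ u| = |∫ x in u..v, ρ' x| := by rw [hftc]
      _ ≤ ∫ x in u..v, |ρ' x| := intervalIntegral.abs_integral_le_integral_abs huv
      _ = ∫ x in Ioc u v, ‖ρ' x‖ := by
          rw [intervalIntegral.integral_of_le huv]; simp [Real.norm_eq_abs]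
      _ = (∫⁻ x in Ioc u v, ‖ρ' x‖ₑ).toReal := integral_norm_eq_lintegral_enorm hmeas'
      _ = (eLpNorm ρ' 1 (volume.restrict (Ioc u v))).toReal := by
          rw [eLpNorm_one_eq_lintegral_enorm]
      _ ≤ A * δ ^ (1 - 1/p) := le_trans
          (ENNReal.toReal_mono hfin2
            (eLpNorm_le_eLpNorm_mul_rpow_measure_univ hP1 hmeas')) hend
  -- uniform sup bound
  have hMbound : ∀ t ∈ Icc τ 0, |ρ t| ≤ B / δ ^ (1/p) + A * δ ^ (1 - 1/p) := by
    intro t ht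
    set a : ℝ := if t + δ ≤ 0 then t else t - δ with ha
    have haτ : τ ≤ a := by
      rw [ha]; split_ifs with h
      · exact ht.1
      · push_neg at h; linarith
    have ha0 : a + δ ≤ 0 := by
      rw [ha]; split_ifs with h
      · exact h
      · push_neg at h; linarith [ht.2]
    have hat : a ≤ t ∧ t ≤ a + δ := by
      rw [ha]; split_ifs with h
      · exact ⟨le_rfl, by linarith⟩
      · exact ⟨by linarith, by linarith⟩
    have hJsub : Icc a (a+δ) ⊆ Icc τ 0 := Icc_subset_Icc haτ ha0
    obtain ⟨s, hsJ, hmin⟩ := isCompact_Icc.exists_isMinOn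
      (nonempty_Icc.2 (by linarith)) ((hcont.mono hJsub).abs)
    have hsB : |ρ s| * δ ^ (1/p) ≤ B := by
      have hrne : volume.restrict (Icc a (a+δ)) ≠ 0 := by
        rw [Ne, Measure.restrict_eq_zero, Real.volume_Icc]
        simp only [add_sub_cancel_left, ENNReal.ofReal_eq_zero, not_le]
        exact hδ0
      have hle : eLpNorm (fun _ : ℝ => ρ s) P (volume.restrict (Icc a (a+δ)))
          ≤ eLpNorm ρ P (volume.restrict (Icc τ 0)) := by
        refine le_trans (eLpNorm_mono_ae ?_)
          (eLpNorm_mono_measure _ (Measure.restrict_mono hJsub le_rfl))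
        exact (ae_restrict_iff' measurableSet_Icc).2 (Filter.Eventually.of_forall fun x hx => by
          simpa [Real.norm_eq_abs] using isMinOn_iff.1 hmin x hx)
      rw [eLpNorm_const _ hP0 hrne, Measure.restrict_apply_univ, Real.volume_Icc,
        hPtoReal] at hle
      have := ENNReal.toReal_mono hBfin hle
      rwa [ENNReal.toReal_mul, ← ENNReal.toReal_rpow,
        ENNReal.toReal_ofReal (by linarith : (0:ℝ) ≤ a + δ - a), toReal_enorm,
        Real.norm_eq_abs, show a + δ - a = δ by ring] at this
    have hsB' : |ρ s| ≤ B / δ ^ (1/p) := (le_div_iff₀ hδp).2 hsB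
    have hts : |ρ t - ρ s| ≤ A * δ ^ (1 - 1/p) := by
      rcases le_total s t with h | h
      · exact key s t (hJsub hsJ) ht h (by linarith [hsJ.1, hat.2])
      · rw [abs_sub_comm]
        exact key t s ht (hJsub hsJ) h (by linarith [hsJ.2, hat.1])
    calc |ρ t| = |ρ s + (ρ t - ρ s)| := by ring_nf
      _ ≤ |ρ s| + |ρ t - ρ s| := abs_add_le _ _
      _ ≤ B / δ ^ (1/p) + A * δ ^ (1 - 1/p) := add_le_add hsB' hts
  -- conclude
  have hres : μ.restrict (Icc τ 0) = μ :=
    Measure.restrict_eq_self_of_ae_mem (mem_ae_iff.mpr hμ)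
  have hnorm := norm_integral_le_of_norm_le_const (μ := μ.restrict (Icc τ 0)) (f := ρ)
    (C := B / δ ^ (1/p) + A * δ ^ (1 - 1/p))
    ((ae_restrict_iff' measurableSet_Icc).2 (Filter.Eventually.of_forall fun x hx => by
      simpa [Real.norm_eq_abs] using hMbound x hx))
  have hμI : ((μ.restrict (Icc τ 0)) Set.univ).toReal ≤ μT := by
    rw [Measure.restrict_apply_univ]
    exact ENNReal.toReal_mono (measure_ne_top μ _) (measure_mono (subset_univ _))
  rw [← hres]
  calc |∫ σ, ρ σ ∂μ.restrict (Icc τ 0)|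
      ≤ (B / δ ^ (1/p) + A * δ ^ (1 - 1/p)) * ((μ.restrict (Icc τ 0)) Set.univ).toReal := by
        simpa [Real.norm_eq_abs, measureReal_def] using hnorm
    _ ≤ (B / δ ^ (1/p) + A * δ ^ (1 - 1/p)) * μT :=
        mul_le_mul_of_nonneg_left hμI (by positivity)
    _ = (μT * δ ^ (1 - 1/p)) * A + (μT / δ ^ (1/p)) * B := by ring
    _ ≤ ε * A + (μT / δ ^ (1/p)) * B := by nlinarith
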